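/- Let R be a commutative integral domain, U a nonprincipal ultrafilter on omega, and (A_n)_{n in omega} a family of ideals of R such that for every subset Y of omega the intersection of the A_n over n in Y is zero if and only if Y belongs to U. For each infinite subset S of omega with S not in U, let B_S be the union over m in omega of the ideals B_{S,m}, where B_{S,m} is the intersection of the A_n over n in S with n > m. Then each B_S is a nonzero ideal of R, and the intersection of the ideals B_S, taken over all infinite subsets S of omega not belonging to U, is zero. -/

import Mathlib

universe u v w

/-- Let `R` be a commutative integral domain, `U` a nonprincipal ultrafilter on `ℕ`, and
`(A n)_{n : ℕ}` a family of ideals of `R` such that for every `Y ⊆ ℕ` the intersection of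
the `A n`, for `n ∈ Y`, is zero iff `Y ∈ U`.  For each infinite `S ⊆ ℕ` with `S ∉ U`, let
`B S` be the union over `m` of the ideals `B_{S,m} = ⋂ {A n : n ∈ S, n > m}` (an
ascending chain of ideals).  Then each `B S` is nonzero, and the intersection of the
`B S`, over all infinite `S ∉ U`, is zero. -/
theorem BS_nonzero_and_inter_BS_eq_bot
    (R : Type u) [CommRing R] [IsDomain R]
    (U : Ultrafilter ℕ) (hU : ∀ Y : Set ℕ, Y.Finite → Y ∉ U)
    (A : ℕ → Ideal R) (hA : ∀ Y : Set ℕ, (⨅ n ∈ Y, A n) = ⊥ ↔ Y ∈ U) :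
    (∀ S : Set ℕ, S.Infinite → S ∉ U →
        (⨆ m, ⨅ n ∈ {n ∈ S | m < n}, A n) ≠ ⊥) ∧
      (⨅ (S : Set ℕ) (_ : S.Infinite) (_ : S ∉ U),
        ⨆ m, ⨅ n ∈ {n ∈ S | m < n}, A n) = ⊥ := by
  constructor
  · intro S hSinf hSU hbot
    have h0 : (⨅ n ∈ {n ∈ S | 0 < n}, A n) = ⊥ := by
      have := le_iSup (fun m => ⨅ n ∈ {n ∈ S | m < n}, A n) 0
      rw [hbot] at this
      exact le_bot_iff.mp this
    have hmem : {n ∈ S | 0 < n} ∈ U := (hA _).mp h0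
    exact hSU (U.toFilter.mem_of_superset hmem (fun n hn => hn.1))
  · rw [eq_bot_iff]
    intro x hx
    by_contra hx0
    -- Z = set of n with x ∉ A n is in U, hence infinite
    set Z : Set ℕ := {n | x ∉ A n} with hZdef
    have hYU : {n | x ∈ A n} ∉ U := by
      intro hmem
      have : (⨅ n ∈ {n | x ∈ A n}, A n) = ⊥ := (hA _).mpr hmem
      have hxin : x ∈ (⨅ n ∈ {n | x ∈ A n}, A n) := by
        simp only [Submodule.mem_iInf]
        exact fun n hn => hn
      rw [this] at hxin
      exact hx0 hxin
    have hZU : Z ∈ U := by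
      have : {n | x ∈ A n}ᶜ ∈ U := (Ultrafilter.compl_mem_iff_notMem).mpr hYU
      exact this
    have hZinf : Z.Infinite := by
      by_contra h
      exact hU Z (Set.not_infinite.mp h) hZU
    -- split Z into two disjoint infinite parts; one is not in U
    have hZinf' : {n | n ∈ Z}.Infinite := hZinf
    set f : ℕ → ℕ := Nat.nth (· ∈ Z) with hfdef
    have finj : Function.Injective f := Nat.nth_injective hZinf'
    have fmem : ∀ k, f k ∈ Z := fun k => Nat.nth_mem_of_infinite hZinf' k
    set S1 : Set ℕ := f '' {k | Even k} with hS1def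
    set S2 : Set ℕ := f '' {k | ¬ Even k} with hS2def
    have hS1inf : S1.Infinite := by
      apply Set.infinite_of_injective_forall_mem (f := fun k : ℕ => f (2 * k))
        (hi := fun a b hab => by have := finj hab; omega)
      intro k
      exact ⟨2 * k, by simp [Set.mem_setOf_eq, even_two_mul], rfl⟩
    have hS2inf : S2.Infinite := by
      apply Set.infinite_of_injective_forall_mem (f := fun k : ℕ => f (2 * k + 1))
        (hi := fun a b hab => by have := finj hab; omega)
      intro k
      refine ⟨2 * k + 1, ?_, rfl⟩
      simp [Set.mem_setOf_eq, Nat.even_add_one, parity_simps]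
    have hdisj : S1 ∩ S2 = ∅ := by
      ext n
      simp only [Set.mem_inter_iff, Set.mem_empty_iff_false, iff_false]
      rintro ⟨⟨a, ha, rfl⟩, ⟨b, hb, hba⟩⟩
      have hab : b = a := finj hba
      subst hab
      exact hb ha
    have hnotboth : S1 ∉ U ∨ S2 ∉ U := by
      by_contra h
      push_neg at h
      have : S1 ∩ S2 ∈ U := Filter.inter_mem h.1 h.2
      rw [hdisj] at this
      exact Filter.empty_notMem (U : Filter ℕ) this
    -- common argument
    have key : ∀ S : Set ℕ, S.Infinite → S ∉ U → S ⊆ Z → False := by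
      intro S hSinf hSU hSZ
      have hxB : x ∈ (⨆ m, ⨅ n ∈ {n ∈ S | m < n}, A n) := by
        have h1 := (Submodule.mem_iInf _).mp hx S
        have h2 := (Submodule.mem_iInf _).mp h1 hSinf
        exact (Submodule.mem_iInf _).mp h2 hSU
      have hmono : Monotone (fun m => ⨅ n ∈ {n ∈ S | m < n}, A n) := by
        intro m m' hmm'
        apply biInf_mono
        intro n hn
        exact ⟨hn.1, lt_of_le_of_lt hmm' hn.2⟩
      obtain ⟨m, hm⟩ := (Submodule.mem_iSup_of_directed _ hmono.directed_le).mp hxB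
      obtain ⟨n, hnS, hnm⟩ := hSinf.exists_gt m
      have : x ∈ A n := by
        have := (Submodule.mem_iInf _).mp hm n
        exact (Submodule.mem_iInf _).mp this ⟨hnS, hnm⟩
      exact hSZ hnS this
    rcases hnotboth with h | h
    · exact key S1 hS1inf h (by rintro n ⟨a, _, rfl⟩; exact fmem a)
    · exact key S2 hS2inf h (by rintro n ⟨a, _, rfl⟩; exact fmem a)
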